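/- Assume (H1), (H2⁰) and K·L < α. Then the maps H and G are near the identity: ‖H(t,ξ) − ξ‖_t ≤ K·M/α and ‖G(t,η) − η‖_t ≤ K·M/α for all t ∈ I and all ξ, η ∈ X. -/

import Mathlib

open Set MeasureTheory Real


lemma seminorm_intervalIntegral_le {X : Type*} [NormedAddCommGroup X] [NormedSpace ℝ X]
    [CompleteSpace X]
    (p : X → ℝ) (hadd : ∀ x y, p (x + y) ≤ p x + p y)
    (hsmul : ∀ (c : ℝ) (x : X), p (c • x) = |c| * p x)
    (C : ℝ) (hpC : ∀ x, p x ≤ C * ‖x‖)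
    (a b : ℝ) (hab : a ≤ b) (f : ℝ → X) (g : ℝ → ℝ)
    (hg : IntervalIntegrable g volume a b)
    (hfg : ∀ᵐ s ∂(volume.restrict (Set.Icc a b)), p (f s) ≤ g s) :
    p (∫ s in a..b, f s) ≤ ∫ s in a..b, g s := by
  have hp0 : p 0 = 0 := by simpa using hsmul 0 0
  have hpn : ∀ x, 0 ≤ p x := by
    intro x
    have h1 : p 0 ≤ p x + p (-x) := by simpa using hadd x (-x)
    have h2 : p (-x) = p x := by simpa using hsmul (-1) x
    nlinarith [hp0]
  have hgnn : ∀ᵐ s ∂(volume.restrict (Set.Icc a b)), (0 : ℝ) ≤ g s :=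
    hfg.mono fun s hs => (hpn _).trans hs
  have hIg : 0 ≤ ∫ s in a..b, g s :=
    intervalIntegral.integral_nonneg_of_ae_restrict hab hgnn
  by_cases hf : IntervalIntegrable f volume a b
  · set v := ∫ s in a..b, f s with hv
    by_cases hv0 : v = 0
    · rw [hv0, hp0]; exact hIg
    · have hdom : ∀ z : (LinearPMap.mkSpanSingleton (K := ℝ) (L := ℝ) (σ := RingHom.id ℝ) v (p v) hv0).domain,
          (LinearPMap.mkSpanSingleton (K := ℝ) (L := ℝ) (σ := RingHom.id ℝ) v (p v) hv0) z ≤ p z.1 := by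
        rintro ⟨z, hz⟩
        have hz' : z ∈ Submodule.span ℝ {v} := hz
        obtain ⟨c, rfl⟩ := Submodule.mem_span_singleton.mp hz'
        have happ : LinearPMap.mkSpanSingleton (K := ℝ) (L := ℝ) (σ := RingHom.id ℝ) v (p v) hv0 ⟨c • v, hz⟩ = c • p v :=
          LinearPMap.mkSpanSingleton'_apply v (p v) _ c hz
        rw [happ, hsmul]
        simpa [smul_eq_mul] using mul_le_mul_of_nonneg_right (le_abs_self c) (hpn v)
      obtain ⟨h, hh1, hh2⟩ := exists_extension_of_le_sublinear
        (LinearPMap.mkSpanSingleton (K := ℝ) (L := ℝ) (σ := RingHom.id ℝ) v (p v) hv0) p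
        (fun c hc x => by rw [hsmul, abs_of_pos hc]) hadd hdom
      have hbound : ∀ x : X, ‖h x‖ ≤ (max C 0) * ‖x‖ := by
        intro x
        have h1 : h x ≤ p x := hh2 x
        have h2 : h (-x) ≤ p (-x) := hh2 (-x)
        have h3 : p (-x) = p x := by simpa using hsmul (-1) x
        have h4 : p x ≤ max C 0 * ‖x‖ := by
          refine (hpC x).trans ?_
          exact mul_le_mul_of_nonneg_right (le_max_left _ _) (norm_nonneg _)
        rw [Real.norm_eq_abs, abs_le]
        constructor
        · have := h2; rw [map_neg, h3] at this; linarith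
        · linarith
      set H : X →L[ℝ] ℝ := h.mkContinuous (max C 0) hbound with hH
      have hHapp : ∀ x, H x = h x := fun x => rfl
      have hpv : p v = H v := by
        have := hh1 ⟨v, Submodule.mem_span_singleton_self v⟩
        rw [LinearPMap.mkSpanSingleton_apply ℝ ℝ (σ := RingHom.id ℝ) hv0 (p v)] at this
        rw [hHapp, this]
      have hcomm : (∫ s in a..b, H (f s)) = H v :=
        H.intervalIntegral_comp_comm hf
      have hHint : IntervalIntegrable (fun s => H (f s)) volume a b := by
        constructor
        · exact (H.integrable_comp hf.1)
        · exact (H.integrable_comp hf.2)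
      have hmono : (∫ s in a..b, H (f s)) ≤ ∫ s in a..b, g s := by
        refine intervalIntegral.integral_mono_ae_restrict hab hHint hg ?_
        exact hfg.mono fun s hs => le_trans (by exact hh2 (f s)) hs
      calc p v = H v := hpv
        _ = ∫ s in a..b, H (f s) := hcomm.symm
        _ ≤ ∫ s in a..b, g s := hmono
  · rw [intervalIntegral.integral_undef hf, hp0]; exact hIg


lemma exp_int_bound (τ₀ t α : ℝ) (ht : τ₀ ≤ t) (hα : 0 < α) :
    (∫ s in τ₀..t, Real.exp (-α * (t - s))) ≤ 1 / α := by
  have hne : (-α) ≠ 0 := by intro h; linarith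
  have h1 : (∫ s in τ₀..t, Real.exp (-α * (t - s)))
      = (-α)⁻¹ * (Real.exp (-α * (t - τ₀)) - Real.exp (-α * (t - t))) := by
    rw [intervalIntegral.integral_comp_sub_left (fun x => Real.exp (-α * x)) t]
    rw [intervalIntegral.integral_comp_mul_left (fun x => Real.exp x) hne]
    rw [integral_exp]
    simp [smul_eq_mul, mul_comm]
  rw [h1]
  have h2 : Real.exp (-α * (t - t)) = 1 := by simp
  rw [h2]
  have h3 : 0 < Real.exp (-α * (t - τ₀)) := Real.exp_pos _
  have h4 : Real.exp (-α * (t - τ₀)) ≤ 1 := by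
    apply Real.exp_le_one_iff.mpr
    nlinarith
  rw [div_eq_mul_inv, one_mul]
  have h5 : (-α)⁻¹ = -(α⁻¹) := inv_neg
  rw [h5]
  have h6 : 0 < α⁻¹ := by positivity
  nlinarith

theorem statement5
    {X : Type*} [NormedAddCommGroup X] [NormedSpace ℝ X] [CompleteSpace X]
    (τ₀ : ℝ)
    (Nt : ℝ → X → ℝ)
    (hNadd : ∀ t : ℝ, ∀ x y : X, Nt t (x + y) ≤ Nt t x + Nt t y)
    (hNsmul : ∀ t : ℝ, ∀ c : ℝ, ∀ x : X, Nt t (c • x) = |c| * Nt t x)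
    (ℓ : ℝ → ℝ)
    (hℓpos : ∀ t ∈ Set.Ici τ₀, 0 < ℓ t)
    (hℓloc : ∀ a b : ℝ, ∃ C : ℝ, ∀ t ∈ Set.Icc a b ∩ Set.Ici τ₀, ℓ t ≤ C)
    (hNequiv : ∀ t ∈ Set.Ici τ₀, ∀ x : X, (1 / ℓ t) * ‖x‖ ≤ Nt t x ∧ Nt t x ≤ ℓ t * ‖x‖)
    (Φ : ℝ → ℝ → X →L[ℝ] X)
    (hΦcont : ContinuousOn (fun p : ℝ × ℝ => Φ p.1 p.2) (Set.Ici τ₀ ×ˢ Set.Ici τ₀))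
    (hΦid : ∀ t ∈ Set.Ici τ₀, Φ t t = ContinuousLinearMap.id ℝ X)
    (hΦcomp : ∀ t ∈ Set.Ici τ₀, ∀ r ∈ Set.Ici τ₀, ∀ s ∈ Set.Ici τ₀,
      Φ t s = (Φ t r).comp (Φ r s))
    (K α : ℝ) (hK : 1 ≤ K) (hα : 0 < α)
    (hH1 : ∀ s ∈ Set.Ici τ₀, ∀ t ∈ Set.Ici τ₀, s ≤ t → ∀ x : X,
      Nt t (Φ t s x) ≤ K * Real.exp (-α * (t - s)) * Nt s x)
    (F : ℝ → X → X)
    (hFmeas : ∀ x : X, StronglyMeasurable (fun t => F t x))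
    (hFcont : ∀ᵐ t ∂(volume.restrict (Set.Ici τ₀)), Continuous (F t))
    (L M : ℝ) (hL : 0 ≤ L) (hM : 0 ≤ M)
    (hH2 : ∀ᵐ t ∂(volume.restrict (Set.Ici τ₀)),
      F t 0 = 0 ∧ (∀ x : X, Nt t (F t x) ≤ M) ∧
        (∀ x y : X, Nt t (F t x - F t y) ≤ L * Nt t (x - y)))
    (sol : ℝ → ℝ → X → X)
    (hsolCont : ContinuousOn (fun p : ℝ × ℝ × X => sol p.1 p.2.1 p.2.2)
      (Set.Ici τ₀ ×ˢ Set.Ici τ₀ ×ˢ (Set.univ : Set X)))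
    (hsolId : ∀ τ ∈ Set.Ici τ₀, ∀ x : X, sol τ τ x = x)
    (hsolGrp : ∀ t₀ ∈ Set.Ici τ₀, ∀ t₁ ∈ Set.Ici τ₀, ∀ t₂ ∈ Set.Ici τ₀, ∀ x : X,
      sol t₂ t₀ x = sol t₂ t₁ (sol t₁ t₀ x))
    (hVOC : ∀ s ∈ Set.Ici τ₀, ∀ t ∈ Set.Ici τ₀, ∀ η : X,
      sol t s η = Φ t s η + ∫ r in s..t, Φ t r (F r (sol r s η)))
    (huniq : ∀ τ ∈ Set.Ici τ₀, ∀ x : ℝ → X, ContinuousOn x (Set.Ici τ₀) →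
      (∀ t ∈ Set.Ici τ₀, x t = Φ t τ (x τ) + ∫ r in τ..t, Φ t r (F r (x r))) →
      ∀ t ∈ Set.Ici τ₀, x t = sol t τ (x τ))
    (hKL : K * L < α)
    (φstar : ℝ → X → ℝ → X)
    (hφstarBC : ∀ τ ∈ Set.Ici τ₀, ∀ ξ : X, ContinuousOn (φstar τ ξ) (Set.Ici τ₀) ∧
      ∃ C : ℝ, ∀ t ∈ Set.Ici τ₀, Nt t (φstar τ ξ t) ≤ C)
    (hφstarFix : ∀ τ ∈ Set.Ici τ₀, ∀ ξ : X, ∀ t ∈ Set.Ici τ₀,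
      φstar τ ξ t = ∫ s in τ₀..t, Φ t s (F s (φstar τ ξ s + Φ s τ ξ)))
    (hφstarUniq : ∀ τ ∈ Set.Ici τ₀, ∀ ξ : X, ∀ ψ : ℝ → X, ContinuousOn ψ (Set.Ici τ₀) →
      (∃ C : ℝ, ∀ t ∈ Set.Ici τ₀, Nt t (ψ t) ≤ C) →
      (∀ t ∈ Set.Ici τ₀, ψ t = ∫ s in τ₀..t, Φ t s (F s (ψ s + Φ s τ ξ))) →
      ∀ t ∈ Set.Ici τ₀, ψ t = φstar τ ξ t)
    :
    (∀ t ∈ Set.Ici τ₀, ∀ ξ : X, Nt t ((ξ + φstar t ξ t) - ξ) ≤ K * M / α) ∧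
    (∀ t ∈ Set.Ici τ₀, ∀ η : X,
      Nt t ((η - ∫ s in τ₀..t, Φ t s (F s (sol s t η))) - η) ≤ K * M / α) := by
  
  have hK0 : (0:ℝ) < K := lt_of_lt_of_le one_pos hK
  have hKM : (0:ℝ) ≤ K * M := mul_nonneg hK0.le hM
  have main : ∀ t ∈ Set.Ici τ₀, ∀ w : ℝ → X,
      Nt t (∫ s in τ₀..t, Φ t s (F s (w s))) ≤ K * M / α := by
    intro t ht w
    have ht' : τ₀ ≤ t := ht
    have hgc : Continuous fun s : ℝ => K * M * Real.exp (-α * (t - s)) := by fun_prop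
    have hfg : ∀ᵐ s ∂(volume.restrict (Set.Icc τ₀ t)),
        Nt t (Φ t s (F s (w s))) ≤ K * M * Real.exp (-α * (t - s)) := by
      have hH2' := ae_restrict_of_ae_restrict_of_subset (Set.Icc_subset_Ici_self : Set.Icc τ₀ t ⊆ Set.Ici τ₀) hH2
      filter_upwards [hH2', ae_restrict_mem measurableSet_Icc] with s hs hmem
      have hs1 : τ₀ ≤ s := hmem.1
      have hs2 : s ≤ t := hmem.2
      have b1 := hH1 s hs1 t ht hs2 (F s (w s))
      have b2 := hs.2.1 (w s)
      have hKe : 0 < K * Real.exp (-α * (t - s)) := mul_pos hK0 (Real.exp_pos _)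
      calc Nt t (Φ t s (F s (w s)))
          ≤ K * Real.exp (-α * (t - s)) * Nt s (F s (w s)) := b1
        _ ≤ K * Real.exp (-α * (t - s)) * M :=
            mul_le_mul_of_nonneg_left b2 hKe.le
        _ = K * M * Real.exp (-α * (t - s)) := by ring
    have hmain := seminorm_intervalIntegral_le (Nt t) (hNadd t) (hNsmul t) (ℓ t)
      (fun x => (hNequiv t ht x).2) τ₀ t ht' _ _
      (hgc.intervalIntegrable τ₀ t) hfg
    refine hmain.trans ?_
    have hint : (∫ s in τ₀..t, K * M * Real.exp (-α * (t - s)))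
        = K * M * ∫ s in τ₀..t, Real.exp (-α * (t - s)) := by
      rw [intervalIntegral.integral_const_mul]
    rw [hint, div_eq_mul_one_div]
    exact mul_le_mul_of_nonneg_left (exp_int_bound τ₀ t α ht' hα) hKM
  constructor
  · intro t ht ξ
    rw [add_sub_cancel_left, hφstarFix t ht ξ t ht]
    exact main t ht _
  · intro t ht η
    have h1 : (η - ∫ s in τ₀..t, Φ t s (F s (sol s t η))) - η
        = (-1 : ℝ) • (∫ s in τ₀..t, Φ t s (F s (sol s t η))) := by
      rw [neg_one_smul]; abel
    rw [h1, hNsmul]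
    simpa using main t ht _
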